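/- arXiv:2101.05514 — 3 statements merged into one kernel-verified Lean document; each statement's English description precedes it below -/
import Mathlib

section
/- The ℝ^{2×2}-matrix-valued kernel on ℝ defined by K(x,z) = [[xz, xz²],[x²z, x²z²]] is a positive semi-definite operator-valued kernel (it is transformable with transformations S₁(x)=x, S₂(x)=x² and base kernel k(x,z)=xz), but it cannot be written in separable form K(x,z) = k(x,z)·T with k a scalar kernel and T a symmetric positive semi-definite 2×2 matrix. -/
open Matrix

/-- The transformable kernel `K(x,z) = [[xz, xz²],[x²z, x²z²]]` is a positive semi-definite
operator-valued kernel, but it is not separable. -/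
theorem transformable_not_separable
    (K : ℝ → ℝ → Matrix (Fin 2) (Fin 2) ℝ)
    (hK : ∀ x z, K x z = !![x * z, x * z ^ 2; x ^ 2 * z, x ^ 2 * z ^ 2]) :
    (∀ x z, K x z = (K z x)ᵀ) ∧
    (∀ (n : ℕ) (x : Fin n → ℝ) (y : Fin n → (Fin 2 → ℝ)),
      0 ≤ ∑ i : Fin n, ∑ j : Fin n, y i ⬝ᵥ (K (x i) (x j) *ᵥ y j)) ∧
    ¬ ∃ (k : ℝ → ℝ → ℝ) (T : Matrix (Fin 2) (Fin 2) ℝ),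
        T.PosSemidef ∧ ∀ x z, K x z = k x z • T := by
  refine ⟨?_, ?_, ?_⟩
  · intro x z
    ext i j
    fin_cases i <;> fin_cases j <;> simp [hK] <;> ring
  · intro n x y
    have key : ∀ i j, y i ⬝ᵥ (K (x i) (x j) *ᵥ y j) =
        (x i * y i 0 + (x i) ^ 2 * y i 1) * (x j * y j 0 + (x j) ^ 2 * y j 1) := by
      intro i j
      rw [hK]
      simp [dotProduct, mulVec, Fin.sum_univ_two]
      ring
    simp_rw [key]
    rw [← Finset.sum_mul_sum]
    exact mul_self_nonneg _
  · rintro ⟨k, T, hT, h⟩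
    have h11 := h 1 1
    have h12 := h 1 2
    rw [hK] at h11 h12
    have a00 : k 1 1 * T 0 0 = 1 := by
      have := congrFun (congrFun h11 0) 0; simpa using this.symm
    have a01 : k 1 1 * T 0 1 = 1 := by
      have := congrFun (congrFun h11 0) 1; simpa using this.symm
    have b00 : k 1 2 * T 0 0 = 2 := by
      have := congrFun (congrFun h12 0) 0; simpa using this.symm
    have b01 : k 1 2 * T 0 1 = 2 ^ 2 := by
      have := congrFun (congrFun h12 0) 1; simpa using this.symm
    have hk : k 1 1 ≠ 0 := by
      intro h0; rw [h0, zero_mul] at a00; norm_num at a00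
    have hTT : T 0 0 = T 0 1 := by
      have := a00.trans a01.symm
      exact mul_left_cancel₀ hk this
    rw [hTT] at b00
    rw [b00] at b01
    norm_num at b01
end

section
/- Entangled kernels are positive semi-definite: let T ∈ ℝ^{p×p} be symmetric positive semi-definite, U ∈ ℝ^{pN×pN} arbitrary, and φ: X → ℝ^N a feature map. Define K(x,z) = tr_{ℝ^N}(U (T ⊗ φ(x)φ(z)^⊤) U^⊤). Then K(x,z) = K(z,x)^⊤ for all x,z and for all finite sequences x₁,...,x_n ∈ X and y₁,...,y_n ∈ ℝ^p one has Σ_{i,j} ⟨y_i, K(x_i,x_j) y_j⟩ ≥ 0. -/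
open Matrix Kronecker

/-- Partial trace over the second factor: blockwise trace of a `pN × pN` block matrix. -/
def ptrace {p N : ℕ} (A : Matrix (Fin p × Fin N) (Fin p × Fin N) ℝ) :
    Matrix (Fin p) (Fin p) ℝ :=
  Matrix.of fun l m => ∑ k : Fin N, A (l, k) (m, k)

lemma sum_rot3 {a b c : ℕ} (f : Fin a → Fin b → Fin c → ℝ) :
    ∑ i, ∑ j, ∑ k, f i j k = ∑ k, ∑ i, ∑ j, f i j k :=
  (Finset.sum_congr rfl fun _ _ => Finset.sum_comm).trans Finset.sum_comm

lemma ptrace_transpose {p N : ℕ} (A : Matrix (Fin p × Fin N) (Fin p × Fin N) ℝ) :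
    ptrace Aᵀ = (ptrace A)ᵀ := by
  ext l m
  simp [ptrace]

lemma vecMulVec_transpose' {N M : ℕ} (a : Fin N → ℝ) (b : Fin M → ℝ) :
    (vecMulVec a b)ᵀ = vecMulVec b a := by
  ext i j
  simp [vecMulVec_apply, mul_comm]

/-- embedding `y ↦ y ⊗ e_k` -/
def emb {p N : ℕ} (y : Fin p → ℝ) (k : Fin N) : Fin p × Fin N → ℝ :=
  fun q => if q.2 = k then y q.1 else 0

lemma ptrace_quad {p N : ℕ} (A : Matrix (Fin p × Fin N) (Fin p × Fin N) ℝ)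
    (y y' : Fin p → ℝ) :
    y ⬝ᵥ (ptrace A *ᵥ y') = ∑ k : Fin N, emb y k ⬝ᵥ (A *ᵥ emb y' k) := by
  have hR : ∀ k : Fin N, emb y k ⬝ᵥ (A *ᵥ emb y' k)
      = ∑ l, ∑ m, y l * (A (l, k) (m, k) * y' m) := by
    intro k
    simp only [dotProduct, mulVec, emb, Fintype.sum_prod_type, dotProduct,
      ite_mul, mul_ite, mul_zero, zero_mul, Finset.sum_ite_eq', Finset.mem_univ, if_true]
    simp [Finset.mul_sum]
  simp only [hR]
  rw [← sum_rot3 fun l m k => y l * (A (l, k) (m, k) * y' m)]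
  simp only [dotProduct, mulVec, ptrace, Matrix.of_apply, Finset.sum_mul, Finset.mul_sum]

/-- contraction `contr a v c = ∑ d, v (c,d) * a d` -/
def contr {p N : ℕ} (a : Fin N → ℝ) (v : Fin p × Fin N → ℝ) : Fin p → ℝ :=
  fun c => ∑ d : Fin N, v (c, d) * a d

lemma kron_quad {p N : ℕ} (T : Matrix (Fin p) (Fin p) ℝ) (a b : Fin N → ℝ)
    (v w : Fin p × Fin N → ℝ) :
    v ⬝ᵥ ((T ⊗ₖ vecMulVec a b) *ᵥ w) = contr a v ⬝ᵥ (T *ᵥ contr b w) := by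
  simp only [dotProduct, mulVec, contr, Fintype.sum_prod_type, kroneckerMap_apply,
    vecMulVec_apply, Finset.mul_sum, Finset.sum_mul]
  refine Finset.sum_congr rfl fun c _ => ?_
  rw [show (∑ d : Fin N, ∑ e : Fin p, ∑ f : Fin N,
      v (c, d) * (T c e * (a d * b f) * w (e, f)))
    = ∑ e : Fin p, ∑ f : Fin N, ∑ d : Fin N,
      v (c, d) * (T c e * (a d * b f) * w (e, f)) from
    (sum_rot3 fun e f d => v (c, d) * (T c e * (a d * b f) * w (e, f))).symm]
  refine Finset.sum_congr rfl fun e _ => Finset.sum_congr rfl fun f _ =>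
    Finset.sum_congr rfl fun d _ => by ring

lemma sum_dp_left {n p : ℕ} (v : Fin n → Fin p → ℝ) (w : Fin p → ℝ) :
    (∑ i : Fin n, v i) ⬝ᵥ w = ∑ i : Fin n, v i ⬝ᵥ w := by
  simp only [dotProduct, Finset.sum_apply, Finset.sum_mul]
  exact Finset.sum_comm

lemma dp_sum_right {n p : ℕ} (v : Fin p → ℝ) (w : Fin n → Fin p → ℝ) :
    v ⬝ᵥ (∑ i : Fin n, w i) = ∑ i : Fin n, v ⬝ᵥ w i := by
  simp only [dotProduct, Finset.sum_apply, Finset.mul_sum]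
  exact Finset.sum_comm

lemma mulVec_sum' {n p : ℕ} (T : Matrix (Fin p) (Fin p) ℝ) (w : Fin n → Fin p → ℝ) :
    T *ᵥ (∑ i : Fin n, w i) = ∑ i : Fin n, T *ᵥ w i := by
  ext c
  simp only [mulVec, dotProduct, Finset.sum_apply, Finset.mul_sum]
  exact Finset.sum_comm

/-- Entangled kernels `K(x,z) = tr_{ℝᴺ}(U (T ⊗ φ(x)φ(z)ᵀ) Uᵀ)` are positive semi-definite
operator-valued kernels. -/
theorem entangled_kernel_posSemidef {X : Type*} {p N : ℕ}
    (T : Matrix (Fin p) (Fin p) ℝ) (hT : T.PosSemidef)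
    (U : Matrix (Fin p × Fin N) (Fin p × Fin N) ℝ)
    (φ : X → (Fin N → ℝ))
    (K : X → X → Matrix (Fin p) (Fin p) ℝ)
    (hK : ∀ x z, K x z = ptrace (U * (T ⊗ₖ vecMulVec (φ x) (φ z)) * Uᵀ)) :
    (∀ x z, K x z = (K z x)ᵀ) ∧
    (∀ (n : ℕ) (x : Fin n → X) (y : Fin n → (Fin p → ℝ)),
      0 ≤ ∑ i : Fin n, ∑ j : Fin n, y i ⬝ᵥ (K (x i) (x j) *ᵥ y j)) := by
  have hTsymm : Tᵀ = T := hT.1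
  constructor
  · intro x z
    rw [hK, hK, ← ptrace_transpose]
    rw [transpose_mul, transpose_mul, transpose_transpose, ← kroneckerMap_transpose,
      hTsymm, vecMulVec_transpose', mul_assoc]
  · intro n x y
    set G : Fin n → Fin N → Fin p → ℝ :=
      fun i k => contr (φ (x i)) (Uᵀ *ᵥ emb (y i) k) with hG
    have key : ∀ i j : Fin n,
        y i ⬝ᵥ (K (x i) (x j) *ᵥ y j) = ∑ k : Fin N, G i k ⬝ᵥ (T *ᵥ G j k) := by
      intro i j
      rw [hK, ptrace_quad]
      refine Finset.sum_congr rfl fun k _ => ?_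
      rw [← Matrix.mulVec_mulVec, ← Matrix.mulVec_mulVec, dotProduct_mulVec,
        ← Matrix.mulVec_transpose, kron_quad]
    simp only [key]
    rw [sum_rot3 fun i j k => G i k ⬝ᵥ (T *ᵥ G j k)]
    refine Finset.sum_nonneg fun k _ => ?_
    have step : ∑ i : Fin n, ∑ j : Fin n, G i k ⬝ᵥ (T *ᵥ G j k) =
        (∑ i : Fin n, G i k) ⬝ᵥ (T *ᵥ ∑ j : Fin n, G j k) := by
      rw [sum_dp_left]
      refine Finset.sum_congr rfl fun i _ => ?_
      rw [mulVec_sum', dp_sum_right]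
    rw [step]
    simpa using hT.dotProduct_mulVec_nonneg (∑ i : Fin n, G i k)
end

section
/- For an entangled kernel with symmetric U whose N×N blocks U_{ij} are all symmetric, T = 𝟙_p 𝟙_p^⊤ (all-ones matrix), and finite-dimensional feature map φ: X → ℝ^N, the kernel K(x,z) = tr_{ℝ^N}(U(T ⊗ φ(x)φ(z)^⊤)U^⊤) has (l,m) entry equal to ⟨S_l(x), S_m(z)⟩ where S_t(x) = Σ_{k=1}^p U_{tk} φ(x); i.e., such an entangled kernel is transformable with linear-kernel base. -/
open Matrix Kronecker

/-- An entangled kernel with symmetric, blockwise-symmetric `U` and `T = 𝟙𝟙ᵀ` is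
transformable: its `(l,m)` entry is `⟨S_l(x), S_m(z)⟩` with `S_t(v) = ∑ₖ U_{tk} v`. -/
theorem entangled_supersymmetric_is_transformable {X : Type*} {p N : ℕ}
    (U : Fin p → Fin p → Matrix (Fin N) (Fin N) ℝ)
    (hUblock : ∀ i j, (U i j)ᵀ = U i j)
    (hUsym : ∀ i j, U i j = U j i)
    (φ : X → (Fin N → ℝ)) (x z : X) (l m : Fin p) :
    ptrace ((Matrix.of fun q r : Fin p × Fin N => U q.1 r.1 q.2 r.2) *
        ((Matrix.of fun _ _ : Fin p => (1 : ℝ)) ⊗ₖ vecMulVec (φ x) (φ z)) *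
        (Matrix.of fun q r : Fin p × Fin N => U q.1 r.1 q.2 r.2)ᵀ) l m
      = (∑ k : Fin p, U l k *ᵥ φ x) ⬝ᵥ (∑ k : Fin p, U m k *ᵥ φ z) := by
  simp only [ptrace, Matrix.mul_apply, Matrix.transpose_apply, Matrix.of_apply,
    kroneckerMap_apply, vecMulVec_apply, dotProduct, mulVec, Finset.sum_apply,
    Fintype.sum_prod_type, one_mul]
  refine Finset.sum_congr rfl fun k _ => ?_
  rw [Finset.mul_sum]
  refine Finset.sum_congr rfl fun b _ => ?_
  rw [Finset.mul_sum]
  refine Finset.sum_congr rfl fun j _ => ?_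
  have h : (∑ a : Fin p, ∑ i : Fin N, U l a k i * (φ x i * φ z j))
      = (∑ a : Fin p, ∑ i : Fin N, U l a k i * φ x i) * φ z j := by
    rw [Finset.sum_mul]
    refine Finset.sum_congr rfl fun a _ => ?_
    rw [Finset.sum_mul]
    exact Finset.sum_congr rfl fun i _ => by ring
  rw [h]; ring
end
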